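/- arXiv:1205.0037 — 2 statements merged into one kernel-verified Lean document; each statement's English description precedes it below -/
import Mathlib

section
/- For integers s ≥ 2 and t ≥ 2, Euler's decomposition holds: ζ(s)·ζ(t) = ∑_{a=0}^{s−1} C(a + t − 1, t − 1) ζ(t + a, s − a) + ∑_{a=0}^{t−1} C(a + s − 1, s − 1) ζ(s + a, t − a), where C(n, k) denotes the binomial coefficient. -/
open Finset
open scoped ENNReal

/-- The Riemann zeta value `ζ(s) = ∑_{n=1}^∞ n^{-s}` for a natural number exponent. -/
noncomputable def zetaVal (s : ℕ) : ℝ :=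
  ∑' n : ℕ, 1 / ((n : ℝ) + 1) ^ s

/-- The double zeta value `ζ(u, v) = ∑_{n₁ > n₂ > 0} n₁^{-u} n₂^{-v}`. -/
noncomputable def zeta2 (u v : ℕ) : ℝ :=
  ∑' p : {p : ℕ × ℕ // 0 < p.2 ∧ p.2 < p.1}, 1 / ((p.1.1 : ℝ) ^ u * (p.1.2 : ℝ) ^ v)


lemma zshift (z : ℝ) (c w : ℝ) (m : ℕ) : (1/z) * (c / (w * z ^ m)) = c / (w * z ^ (m+1)) := by
  rcases eq_or_ne z 0 with rfl | hz
  · simp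
  · rw [pow_succ]; field_simp

lemma zshift_sum (z : ℝ) (S : Finset ℕ) (c : ℕ → ℝ) (w : ℕ → ℝ) (e : ℕ → ℕ) :
    (1/z) * ∑ a ∈ S, c a / (w a * z ^ e a) = ∑ a ∈ S, c a / (w a * z ^ (e a + 1)) := by
  rw [mul_sum]
  exact Finset.sum_congr rfl fun a _ => zshift z (c a) (w a) (e a)

lemma pascal_div (n k : ℕ) (d : ℝ) :
    ((n+1).choose (k+1) : ℝ)/d = (n.choose k : ℝ)/d + (n.choose (k+1) : ℝ)/d := by
  rw [Nat.choose_succ_succ]; push_cast; rw [add_div]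

/-- Partial fraction decomposition identity used in Euler's decomposition. -/
lemma partialFrac : ∀ n s t : ℕ, s + t ≤ n → 1 ≤ s → 1 ≤ t → ∀ x y : ℝ, 0 < x → 0 < y →
    1 / (x ^ s * y ^ t) =
      (∑ a ∈ range s, (Nat.choose (a + t - 1) (t - 1) : ℝ) / (x ^ (s - a) * (x + y) ^ (t + a))) +
      ∑ a ∈ range t, (Nat.choose (a + s - 1) (s - 1) : ℝ) / (y ^ (t - a) * (x + y) ^ (s + a)) := by
  intro n
  induction n with
  | zero => intro s t h hs ht; omega
  | succ n IH =>
    intro s t hn hs ht x y hx hy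
    have hz : (0:ℝ) < x + y := by linarith
    have hx' : x ≠ 0 := ne_of_gt hx
    have hy' : y ≠ 0 := ne_of_gt hy
    have hz' : x + y ≠ 0 := ne_of_gt hz
    rcases Nat.lt_or_ge s 2 with hs2 | hs2
    · obtain rfl : s = 1 := by omega
      rcases Nat.lt_or_ge t 2 with ht2 | ht2
      · -- base case s = t = 1
        obtain rfl : t = 1 := by omega
        simp only [Finset.sum_range_one]
        norm_num
        field_simp
        ring
      · -- s = 1, t ≥ 2
        obtain ⟨k, rfl⟩ : ∃ k, t = k + 2 := ⟨t - 2, by omega⟩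
        have IH1 := IH 1 (k+1) (by omega) le_rfl (by omega) x y hx hy
        have key : 1 / (x ^ 1 * y ^ (k+2)) =
            1 / (y ^ (k+2) * (x+y) ^ 1) + (1/(x+y)) * (1 / (x ^ 1 * y ^ (k+1))) := by
          field_simp
          ring
        have hB : ∑ a ∈ range (k+2), (Nat.choose (a + 1 - 1) (1 - 1) : ℝ) /
              (y ^ ((k+2) - a) * (x + y) ^ (1 + a))
            = 1 / (y ^ (k+2) * (x+y) ^ 1) +
              (1/(x+y)) * ∑ a ∈ range (k+1), (Nat.choose (a + 1 - 1) (1 - 1) : ℝ) /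
                (y ^ ((k+1) - a) * (x + y) ^ (1 + a)) := by
          rw [zshift_sum,
            Finset.sum_range_succ' (fun a => (Nat.choose (a + 1 - 1) (1 - 1) : ℝ) /
              (y ^ ((k+2) - a) * (x + y) ^ (1 + a))) (k+1)]
          rw [add_comm]
          congr 1
          · norm_num
          · refine Finset.sum_congr rfl fun a _ => ?_
            rw [show a + 1 + 1 - 1 = a + 1 - 1 + 1 by omega,
              show (k+2) - (a+1) = (k+1) - a by omega,
              show 1 + (a+1) = 1 + a + 1 by omega]
            norm_num
        have hA : ∑ a ∈ range 1, (Nat.choose (a + (k+2) - 1) ((k+2) - 1) : ℝ) /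
              (x ^ (1 - a) * (x + y) ^ ((k+2) + a))
            = (1/(x+y)) * ∑ a ∈ range 1, (Nat.choose (a + (k+1) - 1) ((k+1) - 1) : ℝ) /
              (x ^ (1 - a) * (x + y) ^ ((k+1) + a)) := by
          rw [zshift_sum]
          refine Finset.sum_congr rfl fun a ha => ?_
          simp only [Finset.mem_range, Nat.lt_one_iff] at ha
          subst ha
          norm_num
        rw [hA, hB, key, IH1]
        ring
    · rcases Nat.lt_or_ge t 2 with ht2 | ht2
      · -- t = 1, s ≥ 2
        obtain rfl : t = 1 := by omega
        obtain ⟨k, rfl⟩ : ∃ k, s = k + 2 := ⟨s - 2, by omega⟩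
        have IH1 := IH (k+1) 1 (by omega) (by omega) le_rfl x y hx hy
        have key : 1 / (x ^ (k+2) * y ^ 1) =
            1 / (x ^ (k+2) * (x+y) ^ 1) + (1/(x+y)) * (1 / (x ^ (k+1) * y ^ 1)) := by
          field_simp
          ring
        have hB : ∑ a ∈ range (k+2), (Nat.choose (a + 1 - 1) (1 - 1) : ℝ) /
              (x ^ ((k+2) - a) * (x + y) ^ (1 + a))
            = 1 / (x ^ (k+2) * (x+y) ^ 1) +
              (1/(x+y)) * ∑ a ∈ range (k+1), (Nat.choose (a + 1 - 1) (1 - 1) : ℝ) /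
                (x ^ ((k+1) - a) * (x + y) ^ (1 + a)) := by
          rw [zshift_sum,
            Finset.sum_range_succ' (fun a => (Nat.choose (a + 1 - 1) (1 - 1) : ℝ) /
              (x ^ ((k+2) - a) * (x + y) ^ (1 + a))) (k+1)]
          rw [add_comm]
          congr 1
          · norm_num
          · refine Finset.sum_congr rfl fun a _ => ?_
            rw [show a + 1 + 1 - 1 = a + 1 - 1 + 1 by omega,
              show (k+2) - (a+1) = (k+1) - a by omega,
              show 1 + (a+1) = 1 + a + 1 by omega]
            norm_num
        have hA : ∑ a ∈ range 1, (Nat.choose (a + (k+2) - 1) ((k+2) - 1) : ℝ) /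
              (y ^ (1 - a) * (x + y) ^ ((k+2) + a))
            = (1/(x+y)) * ∑ a ∈ range 1, (Nat.choose (a + (k+1) - 1) ((k+1) - 1) : ℝ) /
              (y ^ (1 - a) * (x + y) ^ ((k+1) + a)) := by
          rw [zshift_sum]
          refine Finset.sum_congr rfl fun a ha => ?_
          simp only [Finset.mem_range, Nat.lt_one_iff] at ha
          subst ha
          norm_num
        rw [hB, hA, key, IH1]
        ring
      · -- main case: s, t ≥ 2
        obtain ⟨p, rfl⟩ : ∃ p, s = p + 2 := ⟨s - 2, by omega⟩
        obtain ⟨q, rfl⟩ : ∃ q, t = q + 2 := ⟨t - 2, by omega⟩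
        have IH1 := IH (p+2) (q+1) (by omega) (by omega) (by omega) x y hx hy
        have IH2 := IH (p+1) (q+2) (by omega) (by omega) (by omega) x y hx hy
        have key : 1 / (x ^ (p+2) * y ^ (q+2)) =
            (1/(x+y)) * (1 / (x ^ (p+2) * y ^ (q+1))) +
            (1/(x+y)) * (1 / (x ^ (p+1) * y ^ (q+2))) := by
          field_simp
          ring
        have hA : ∑ a ∈ range (p+2), (Nat.choose (a + (q+2) - 1) ((q+2) - 1) : ℝ) /
              (x ^ ((p+2) - a) * (x + y) ^ ((q+2) + a))
            = (1/(x+y)) * (∑ a ∈ range (p+2), (Nat.choose (a + (q+1) - 1) ((q+1) - 1) : ℝ) /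
                (x ^ ((p+2) - a) * (x + y) ^ ((q+1) + a)))
            + (1/(x+y)) * (∑ a ∈ range (p+1), (Nat.choose (a + (q+2) - 1) ((q+2) - 1) : ℝ) /
                (x ^ ((p+1) - a) * (x + y) ^ ((q+2) + a))) := by
          rw [zshift_sum, zshift_sum]
          simp only [Finset.sum_range_succ' (fun a => (Nat.choose (a + (q+2) - 1) ((q+2) - 1) : ℝ) /
              (x ^ ((p+2) - a) * (x + y) ^ ((q+2) + a))) (p+1),
            Finset.sum_range_succ' (fun a => (Nat.choose (a + (q+1) - 1) ((q+1) - 1) : ℝ) /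
              (x ^ ((p+2) - a) * (x + y) ^ ((q+1) + a + 1))) (p+1)]
          have hpt : ∀ a ∈ range (p+1),
              (Nat.choose (a + 1 + (q+2) - 1) ((q+2) - 1) : ℝ) /
                (x ^ ((p+2) - (a+1)) * (x + y) ^ ((q+2) + (a+1)))
              = (Nat.choose (a + 1 + (q+1) - 1) ((q+1) - 1) : ℝ) /
                  (x ^ ((p+2) - (a+1)) * (x + y) ^ ((q+1) + (a+1) + 1))
                + (Nat.choose (a + (q+2) - 1) ((q+2) - 1) : ℝ) /
                  (x ^ ((p+1) - a) * (x + y) ^ ((q+2) + a + 1)) := by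
            intro a _
            rw [show a + 1 + (q + 2) - 1 = (a + q + 1) + 1 by omega,
              show (q + 2) - 1 = q + 1 by omega,
              show (p + 2) - (a + 1) = (p + 1) - a by omega,
              show (q + 2) + (a + 1) = (q + 1) + (a + 1) + 1 by omega,
              show a + 1 + (q + 1) - 1 = a + q + 1 by omega,
              show (q + 1) - 1 = q by omega,
              show a + (q + 2) - 1 = a + q + 1 by omega,
              show (q + 2) + a + 1 = (q + 1) + (a + 1) + 1 by omega]
            exact pascal_div (a + q + 1) q _
          rw [Finset.sum_congr rfl hpt, Finset.sum_add_distrib,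
            show 0 + (q + 2) - 1 = q + 1 by omega, show (q + 2) - 1 = q + 1 by omega,
            show 0 + (q + 1) - 1 = q by omega, show (q + 1) - 1 = q by omega,
            Nat.choose_self, Nat.choose_self,
            show (q + 2) + 0 = (q + 1) + 0 + 1 by omega]
          ring
        have hB : ∑ a ∈ range (q+2), (Nat.choose (a + (p+2) - 1) ((p+2) - 1) : ℝ) /
              (y ^ ((q+2) - a) * (x + y) ^ ((p+2) + a))
            = (1/(x+y)) * (∑ a ∈ range (q+1), (Nat.choose (a + (p+2) - 1) ((p+2) - 1) : ℝ) /
                (y ^ ((q+1) - a) * (x + y) ^ ((p+2) + a)))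
            + (1/(x+y)) * (∑ a ∈ range (q+2), (Nat.choose (a + (p+1) - 1) ((p+1) - 1) : ℝ) /
                (y ^ ((q+2) - a) * (x + y) ^ ((p+1) + a))) := by
          rw [zshift_sum, zshift_sum]
          simp only [Finset.sum_range_succ' (fun a => (Nat.choose (a + (p+2) - 1) ((p+2) - 1) : ℝ) /
              (y ^ ((q+2) - a) * (x + y) ^ ((p+2) + a))) (q+1),
            Finset.sum_range_succ' (fun a => (Nat.choose (a + (p+1) - 1) ((p+1) - 1) : ℝ) /
              (y ^ ((q+2) - a) * (x + y) ^ ((p+1) + a + 1))) (q+1)]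
          have hpt : ∀ a ∈ range (q+1),
              (Nat.choose (a + 1 + (p+2) - 1) ((p+2) - 1) : ℝ) /
                (y ^ ((q+2) - (a+1)) * (x + y) ^ ((p+2) + (a+1)))
              = (Nat.choose (a + 1 + (p+1) - 1) ((p+1) - 1) : ℝ) /
                  (y ^ ((q+2) - (a+1)) * (x + y) ^ ((p+1) + (a+1) + 1))
                + (Nat.choose (a + (p+2) - 1) ((p+2) - 1) : ℝ) /
                  (y ^ ((q+1) - a) * (x + y) ^ ((p+2) + a + 1)) := by
            intro a _
            rw [show a + 1 + (p + 2) - 1 = (a + p + 1) + 1 by omega,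
              show (p + 2) - 1 = p + 1 by omega,
              show (q + 2) - (a + 1) = (q + 1) - a by omega,
              show (p + 2) + (a + 1) = (p + 1) + (a + 1) + 1 by omega,
              show a + 1 + (p + 1) - 1 = a + p + 1 by omega,
              show (p + 1) - 1 = p by omega,
              show a + (p + 2) - 1 = a + p + 1 by omega,
              show (p + 2) + a + 1 = (p + 1) + (a + 1) + 1 by omega]
            rw [pascal_div (a + p + 1) p]
          rw [Finset.sum_congr rfl hpt, Finset.sum_add_distrib,
            show 0 + (p + 2) - 1 = p + 1 by omega, show (p + 2) - 1 = p + 1 by omega,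
            show 0 + (p + 1) - 1 = p by omega, show (p + 1) - 1 = p by omega,
            Nat.choose_self, Nat.choose_self,
            show (p + 2) + 0 = (p + 1) + 0 + 1 by omega]
          ring
        rw [hA, hB, key, IH1, IH2]
        ring

open ENNReal in
noncomputable def Ze (s : ℕ) : ℝ≥0∞ := ∑' n : ℕ, ENNReal.ofReal (1 / ((n : ℝ) + 1) ^ s)

open ENNReal in
noncomputable def Z2e (u v : ℕ) : ℝ≥0∞ :=
  ∑' p : {p : ℕ × ℕ // 0 < p.2 ∧ p.2 < p.1},
    ENNReal.ofReal (1 / ((p.1.1 : ℝ) ^ u * (p.1.2 : ℝ) ^ v))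

lemma zetaVal_eq (s : ℕ) : zetaVal s = (Ze s).toReal := by
  rw [Ze, ENNReal.tsum_toReal_eq (fun a => ENNReal.ofReal_ne_top)]
  refine tsum_congr fun n => ?_
  rw [ENNReal.toReal_ofReal (by positivity)]

lemma zeta2_eq (u v : ℕ) : zeta2 u v = (Z2e u v).toReal := by
  rw [Z2e, ENNReal.tsum_toReal_eq (fun a => ENNReal.ofReal_ne_top)]
  refine tsum_congr fun p => ?_
  rw [ENNReal.toReal_ofReal (by positivity)]

lemma Ze_ne_top {s : ℕ} (hs : 2 ≤ s) : Ze s ≠ ⊤ := by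
  have hsum : Summable (fun n : ℕ => 1 / ((n : ℝ) + 1) ^ s) := by
    have h := (summable_nat_add_iff 1).mpr (Real.summable_one_div_nat_pow.2 hs)
    refine h.congr fun n => ?_
    push_cast
    ring
  rw [Ze, ← ENNReal.ofReal_tsum_of_nonneg (fun n => by positivity) hsum]
  exact ENNReal.ofReal_ne_top

/-- Reindexing bijection for the first family of double-zeta sums. -/
def emb1 : ℕ × ℕ ≃ {p : ℕ × ℕ // 0 < p.2 ∧ p.2 < p.1} where
  toFun q := ⟨(q.1 + q.2 + 2, q.1 + 1), by omega⟩
  invFun p := (p.1.2 - 1, p.1.1 - p.1.2 - 1)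
  left_inv q := by
    obtain ⟨a, b⟩ := q
    simp only [Prod.mk.injEq]
    omega
  right_inv p := by
    obtain ⟨⟨m, k⟩, h1, h2⟩ := p
    simp only [Subtype.mk.injEq, Prod.mk.injEq]
    constructor <;> omega

/-- Reindexing bijection for the second family of double-zeta sums. -/
def emb2 : ℕ × ℕ ≃ {p : ℕ × ℕ // 0 < p.2 ∧ p.2 < p.1} where
  toFun q := ⟨(q.1 + q.2 + 2, q.2 + 1), by omega⟩
  invFun p := (p.1.1 - p.1.2 - 1, p.1.2 - 1)
  left_inv q := by
    obtain ⟨a, b⟩ := q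
    simp only [Prod.mk.injEq]
    omega
  right_inv p := by
    obtain ⟨⟨m, k⟩, h1, h2⟩ := p
    simp only [Subtype.mk.injEq, Prod.mk.injEq]
    constructor <;> omega

lemma family1 (u v : ℕ) :
    (∑' pq : ℕ × ℕ, ENNReal.ofReal
      (1 / (((pq.1 : ℝ) + 1) ^ v * ((pq.1 : ℝ) + (pq.2 : ℝ) + 2) ^ u))) = Z2e u v := by
  rw [Z2e, ← Equiv.tsum_eq emb1]
  refine tsum_congr fun q => ?_
  congr 1
  simp only [emb1, Equiv.coe_fn_mk]
  push_cast
  ring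

lemma family2 (u v : ℕ) :
    (∑' pq : ℕ × ℕ, ENNReal.ofReal
      (1 / (((pq.2 : ℝ) + 1) ^ v * ((pq.1 : ℝ) + (pq.2 : ℝ) + 2) ^ u))) = Z2e u v := by
  rw [Z2e, ← Equiv.tsum_eq emb2]
  refine tsum_congr fun q => ?_
  congr 1
  simp only [emb2, Equiv.coe_fn_mk]
  push_cast
  ring

lemma main_e (s t : ℕ) (hs : 2 ≤ s) (ht : 2 ≤ t) :
    Ze s * Ze t =
      (∑ a ∈ Finset.range s,
        (Nat.choose (a + t - 1) (t - 1) : ℝ≥0∞) * Z2e (t + a) (s - a)) +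
      ∑ a ∈ Finset.range t,
        (Nat.choose (a + s - 1) (s - 1) : ℝ≥0∞) * Z2e (s + a) (t - a) := by
  have h1 : Ze s * Ze t = ∑' pq : ℕ × ℕ,
      ENNReal.ofReal (1 / (((pq.1 : ℝ) + 1) ^ s * ((pq.2 : ℝ) + 1) ^ t)) := by
    rw [Ze, Ze, ← ENNReal.tsum_mul_right, ENNReal.tsum_prod']
    refine tsum_congr fun x => ?_
    rw [← ENNReal.tsum_mul_left]
    refine tsum_congr fun y => ?_
    rw [← ENNReal.ofReal_mul (by positivity)]
    congr 1
    field_simp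
  have h2 : ∀ pq : ℕ × ℕ,
      ENNReal.ofReal (1 / (((pq.1 : ℝ) + 1) ^ s * ((pq.2 : ℝ) + 1) ^ t))
      = (∑ a ∈ Finset.range s, ENNReal.ofReal ((Nat.choose (a + t - 1) (t - 1) : ℝ) /
          (((pq.1 : ℝ) + 1) ^ (s - a) * (((pq.1 : ℝ) + 1) + ((pq.2 : ℝ) + 1)) ^ (t + a))))
        + ∑ a ∈ Finset.range t, ENNReal.ofReal ((Nat.choose (a + s - 1) (s - 1) : ℝ) /
          (((pq.2 : ℝ) + 1) ^ (t - a) * (((pq.1 : ℝ) + 1) + ((pq.2 : ℝ) + 1)) ^ (s + a))) := by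
    intro pq
    rw [partialFrac (s + t) s t le_rfl (by omega) (by omega) ((pq.1 : ℝ) + 1) ((pq.2 : ℝ) + 1)
      (by positivity) (by positivity)]
    rw [ENNReal.ofReal_add (by positivity) (by positivity),
      ENNReal.ofReal_sum_of_nonneg (fun a _ => by positivity),
      ENNReal.ofReal_sum_of_nonneg (fun a _ => by positivity)]
  rw [h1, tsum_congr h2, ENNReal.tsum_add,
    Summable.tsum_finsetSum (fun a _ => ENNReal.summable), Summable.tsum_finsetSum (fun a _ => ENNReal.summable)]
  congr 1
  · refine Finset.sum_congr rfl fun a _ => ?_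
    rw [← family1 (t + a) (s - a), ← ENNReal.tsum_mul_left]
    refine tsum_congr fun pq => ?_
    rw [← ENNReal.ofReal_natCast, ← ENNReal.ofReal_mul (by positivity)]
    congr 1
    rw [mul_one_div]
    congr 2
    push_cast
    ring
  · refine Finset.sum_congr rfl fun a _ => ?_
    rw [← family2 (s + a) (t - a), ← ENNReal.tsum_mul_left]
    refine tsum_congr fun pq => ?_
    rw [← ENNReal.ofReal_natCast, ← ENNReal.ofReal_mul (by positivity)]
    congr 1
    rw [mul_one_div]
    congr 2
    push_cast
    ring

/-- **Euler's decomposition.** For integers `s, t ≥ 2`,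
`ζ(s)ζ(t) = ∑_{a=0}^{s-1} C(a+t-1, t-1) ζ(t+a, s-a)
          + ∑_{a=0}^{t-1} C(a+s-1, s-1) ζ(s+a, t-a)`. -/
theorem euler_decomposition (s t : ℕ) (hs : 2 ≤ s) (ht : 2 ≤ t) :
    zetaVal s * zetaVal t =
      (∑ a ∈ Finset.range s,
        (Nat.choose (a + t - 1) (t - 1) : ℝ) * zeta2 (t + a) (s - a)) +
      ∑ a ∈ Finset.range t,
        (Nat.choose (a + s - 1) (s - 1) : ℝ) * zeta2 (s + a) (t - a) := by
  have hmain := main_e s t hs ht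
  have hfin : Ze s * Ze t ≠ ⊤ := ENNReal.mul_ne_top (Ze_ne_top hs) (Ze_ne_top ht)
  have h1fin : ∀ a ∈ Finset.range s,
      (Nat.choose (a + t - 1) (t - 1) : ℝ≥0∞) * Z2e (t + a) (s - a) ≠ ⊤ := by
    intro a ha
    refine ne_top_of_le_ne_top hfin ?_
    rw [hmain]
    exact le_trans (Finset.single_le_sum
      (f := fun a => (Nat.choose (a + t - 1) (t - 1) : ℝ≥0∞) * Z2e (t + a) (s - a))
      (fun i _ => zero_le) ha) le_self_add
  have h2fin : ∀ a ∈ Finset.range t,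
      (Nat.choose (a + s - 1) (s - 1) : ℝ≥0∞) * Z2e (s + a) (t - a) ≠ ⊤ := by
    intro a ha
    refine ne_top_of_le_ne_top hfin ?_
    rw [hmain]
    exact le_trans (Finset.single_le_sum
      (f := fun a => (Nat.choose (a + s - 1) (s - 1) : ℝ≥0∞) * Z2e (s + a) (t - a))
      (fun i _ => zero_le) ha) le_add_self
  rw [zetaVal_eq, zetaVal_eq, ← ENNReal.toReal_mul, hmain,
    ENNReal.toReal_add (ENNReal.sum_ne_top.2 h1fin) (ENNReal.sum_ne_top.2 h2fin),
    ENNReal.toReal_sum h1fin, ENNReal.toReal_sum h2fin]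
  refine congrArg₂ (· + ·) ?_ ?_ <;> refine Finset.sum_congr rfl fun a _ => ?_ <;>
    rw [ENNReal.toReal_mul, ENNReal.toReal_natCast, zeta2_eq]
end

section
/- For any positive integer r, T(1, 1, ..., 1; 1) = r! · ζ(r + 1), where there are r ones among the first arguments of T and ζ denotes the Riemann zeta function. Equivalently, ∑_{m_1, ..., m_r ≥ 1} 1/(m_1 m_2 ⋯ m_r (m_1 + ⋯ + m_r)) = r! ∑_{n=1}^∞ n^{-(r+1)}. -/
/-- The term of the Mordell–Tornheim series `T(s_1, …, s_r; s)` with positive integer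
arguments, indexed by tuples of positive integers `m_1, …, m_r`. -/
noncomputable def MTterm (r : ℕ) (s' : Fin r → ℕ) (s : ℕ)
    (m : {m : Fin r → ℕ // ∀ j, 0 < m j}) : ℝ :=
  1 / ((∏ j, (m.1 j : ℝ) ^ s' j) * ((∑ j, m.1 j : ℕ) : ℝ) ^ s)

/-- The Mordell–Tornheim zeta value `T(s_1, …, s_r; s)`. -/
noncomputable def MT (r : ℕ) (s' : Fin r → ℕ) (s : ℕ) : ℝ :=
  ∑' m, MTterm r s' s m

open MeasureTheory Real Set ENNReal

section Aux

/-- Auxiliary: a tsum of products over `Fin r → ℕ` factors as a power. -/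
lemma MTaux.tsum_pi_prod : ∀ (r : ℕ) (f : ℕ → ℝ≥0∞),
    (∑' n : Fin r → ℕ, ∏ j, f (n j)) = (∑' k, f k) ^ r := by
  intro r
  induction r with
  | zero =>
    intro f
    simp only [Finset.univ_eq_empty, Finset.prod_empty, pow_zero]
    exact tsum_eq_single (fun (j : Fin 0) => 0)
      (by intro b hb; exact absurd (funext fun j => j.elim0) hb) |>.trans rfl
  | succ r ih =>
    intro f
    rw [← (Fin.consEquiv (fun _ : Fin (r+1) => ℕ)).tsum_eq (fun n => ∏ j, f (n j))]
    rw [ENNReal.tsum_prod']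
    calc (∑' (k : ℕ) (n : Fin r → ℕ), ∏ j, f ((Fin.consEquiv (fun _ : Fin (r+1) => ℕ)) (k, n) j))
        = ∑' (k : ℕ), f k * (∑' n : Fin r → ℕ, ∏ j, f (n j)) := by
          congr 1; funext k
          rw [← ENNReal.tsum_mul_left]
          congr 1; funext n
          simp [Fin.prod_univ_succ]
      _ = (∑' k, f k) ^ (r + 1) := by
          rw [ih f, ENNReal.tsum_mul_right, pow_succ, mul_comm]

/-- Auxiliary: reindexing positive tuples by arbitrary tuples. -/
def MTaux.posEquiv (r : ℕ) : (Fin r → ℕ) ≃ {m : Fin r → ℕ // ∀ j, 0 < m j} where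
  toFun n := ⟨fun j => n j + 1, fun j => Nat.succ_pos _⟩
  invFun m := fun j => m.1 j - 1
  left_inv n := by funext j; simp
  right_inv m := by ext j; have := m.2 j; simp; omega

lemma MTaux.lint_pow (k : ℕ) :
    ∫⁻ x in Ioo (0:ℝ) 1, ENNReal.ofReal (x ^ k) = ENNReal.ofReal (1 / (k + 1)) := by
  have hInt : IntegrableOn (fun x : ℝ => x ^ k) (Ioo 0 1) :=
    ((continuous_pow k).integrableOn_Icc (a := 0) (b := 1)).mono_set Ioo_subset_Icc_self
  have hnn : 0 ≤ᵐ[volume.restrict (Ioo (0:ℝ) 1)] fun x : ℝ => x ^ k := by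
    filter_upwards [ae_restrict_mem measurableSet_Ioo] with x hx
    exact pow_nonneg hx.1.le k
  rw [← ofReal_integral_eq_lintegral_ofReal hInt hnn]
  congr 1
  rw [← integral_Ioc_eq_integral_Ioo, ← intervalIntegral.integral_of_le zero_le_one,
    integral_pow]
  simp

/-- One-dimensional change-of-variables formula for the Lebesgue integral. -/
lemma MTaux.lintegral_image_eq_lintegral_abs_deriv_mul {s : Set ℝ} {f f' : ℝ → ℝ}
    (hs : MeasurableSet s) (hf' : ∀ x ∈ s, HasDerivWithinAt f (f' x) s x)
    (hf : InjOn f s) (g : ℝ → ℝ≥0∞) :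
    ∫⁻ x in f '' s, g x = ∫⁻ x in s, ENNReal.ofReal |f' x| * g (f x) := by
  simpa only [ContinuousLinearMap.det_toSpanSingleton] using
    lintegral_image_eq_lintegral_abs_det_fderiv_mul volume hs
      (fun x hx => (hf' x hx).hasFDerivWithinAt) hf g

lemma MTaux.hasDeriv_sub_exp (t : ℝ) :
    HasDerivAt (fun t : ℝ => 1 - Real.exp (-t)) (Real.exp (-t)) t := by
  simpa using ((Real.hasDerivAt_exp (-t)).comp t (hasDerivAt_neg t)).const_sub 1

lemma MTaux.strictMono_sub_exp : StrictMono (fun t : ℝ => 1 - Real.exp (-t)) := by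
  intro a b h
  simp only [sub_lt_sub_iff_left]
  exact Real.exp_lt_exp.2 (neg_lt_neg h)

lemma MTaux.image_sub_exp : (fun t : ℝ => 1 - Real.exp (-t)) '' Ioi 0 = Ioo 0 1 := by
  ext y
  constructor
  · rintro ⟨t, ht, rfl⟩
    have h1 : Real.exp (-t) < 1 := Real.exp_lt_one_iff.2 (by simpa using ht)
    have h2 : 0 < Real.exp (-t) := Real.exp_pos _
    simp only [mem_Ioo]
    exact ⟨by linarith, by linarith⟩
  · rintro ⟨h0, h1⟩
    refine ⟨-Real.log (1 - y), ?_, ?_⟩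
    · exact mem_Ioi.mpr (neg_pos.mpr (Real.log_neg (by linarith) (by linarith)))
    · simp [Real.exp_log (by linarith : (0:ℝ) < 1 - y)]

lemma MTaux.lint_gamma (r k : ℕ) :
    ∫⁻ t in Ioi (0:ℝ), ENNReal.ofReal (t ^ r * Real.exp (-((k:ℝ)+1) * t))
      = ENNReal.ofReal ((r.factorial : ℝ) / ((k:ℝ)+1) ^ (r+1)) := by
  have hb : (0:ℝ) < (k:ℝ) + 1 := by positivity
  have hInt : IntegrableOn (fun t : ℝ => t ^ r * Real.exp (-((k:ℝ)+1) * t)) (Ioi 0) := by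
    have := integrableOn_rpow_mul_exp_neg_mul_rpow (s := (r:ℝ)) (p := 1) (b := (k:ℝ)+1)
      (lt_of_lt_of_le (by norm_num) (Nat.cast_nonneg r)) zero_lt_one hb
    simpa [Real.rpow_natCast, Real.rpow_one] using this
  have hnn : 0 ≤ᵐ[volume.restrict (Ioi (0:ℝ))]
      fun t : ℝ => t ^ r * Real.exp (-((k:ℝ)+1) * t) := by
    filter_upwards [ae_restrict_mem measurableSet_Ioi] with t ht
    have : (0:ℝ) < t := ht
    positivity
  rw [← ofReal_integral_eq_lintegral_ofReal hInt hnn]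
  congr 1
  have := integral_rpow_mul_exp_neg_mul_Ioi (a := (r:ℝ)+1) (r := (k:ℝ)+1)
    (by positivity) hb
  have heq : ∀ t ∈ Ioi (0:ℝ), t ^ (((r:ℝ)+1) - 1) * Real.exp (-(((k:ℝ)+1) * t))
      = t ^ r * Real.exp (-((k:ℝ)+1) * t) := by
    intro t ht
    rw [add_sub_cancel_right, Real.rpow_natCast, neg_mul]
  rw [setIntegral_congr_fun measurableSet_Ioi heq] at this
  rw [this]
  rw [Real.Gamma_nat_eq_factorial,
    show ((r:ℝ)+1) = ((r+1 : ℕ):ℝ) by push_cast; ring, Real.rpow_natCast, one_div, inv_pow]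
  ring

lemma MTaux.keyx {x : ℝ} (hx : x ∈ Ioo (0:ℝ) 1) (r : ℕ) (hr : 0 < r) :
    (∑' n : Fin r → ℕ,
        ENNReal.ofReal (x ^ ((∑ j, (n j + 1)) - 1) / ∏ j, ((n j : ℝ) + 1)))
      = ENNReal.ofReal ((-Real.log (1 - x)) ^ r / x) := by
  obtain ⟨hx0, hx1⟩ := hx
  have hL : 0 ≤ -Real.log (1 - x) :=
    neg_nonneg.2 (Real.log_nonpos (by linarith) (by linarith))
  have hterm : ∀ n : Fin r → ℕ,
      x ^ ((∑ j, (n j + 1)) - 1) / ∏ j, ((n j : ℝ) + 1)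
        = (1/x) * ∏ j : Fin r, (x ^ (n j + 1) / ((n j : ℝ) + 1)) := by
    intro n
    have hS : 1 ≤ ∑ j, (n j + 1) := by
      have : r ≤ ∑ j : Fin r, (n j + 1) := by
        calc r = ∑ _j : Fin r, 1 := by simp
          _ ≤ _ := Finset.sum_le_sum (fun j _ => by omega)
      omega
    have hxS : x ^ ((∑ j, (n j + 1)) - 1) = (∏ j, x ^ (n j + 1)) / x := by
      rw [Finset.prod_pow_eq_pow_sum]
      rw [eq_div_iff (ne_of_gt hx0), ← pow_succ]
      congr 1
      omega
    rw [hxS, Finset.prod_div_distrib]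
    have hc : (0:ℝ) < ∏ j, ((n j : ℝ) + 1) :=
      Finset.prod_pos (fun j _ => by positivity)
    field_simp
  have hgnn : ∀ k : ℕ, 0 ≤ x ^ (k+1) / ((k:ℝ)+1) := fun k => by positivity
  have hsum : HasSum (fun k : ℕ => x ^ (k+1) / ((k:ℝ)+1)) (-Real.log (1-x)) := by
    have := hasSum_pow_div_log_of_abs_lt_one (x := x) (abs_lt.2 ⟨by linarith, hx1⟩)
    simpa using this
  calc (∑' n : Fin r → ℕ,
        ENNReal.ofReal (x ^ ((∑ j, (n j + 1)) - 1) / ∏ j, ((n j : ℝ) + 1)))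
      = ∑' n : Fin r → ℕ, ENNReal.ofReal (1/x)
          * ∏ j : Fin r, ENNReal.ofReal (x ^ (n j + 1) / ((n j : ℝ) + 1)) := by
        congr 1; funext n
        rw [hterm n, ENNReal.ofReal_mul (by positivity),
          ENNReal.ofReal_prod_of_nonneg (fun j _ => hgnn (n j))]
    _ = ENNReal.ofReal (1/x) * (∑' k : ℕ, ENNReal.ofReal (x ^ (k+1) / ((k:ℝ)+1))) ^ r := by
        rw [ENNReal.tsum_mul_left,
          MTaux.tsum_pi_prod r (fun k => ENNReal.ofReal (x ^ (k+1) / ((k:ℝ)+1)))]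
    _ = ENNReal.ofReal (1/x) * ENNReal.ofReal ((-Real.log (1-x)) ^ r) := by
        rw [← ENNReal.ofReal_tsum_of_nonneg hgnn hsum.summable, hsum.tsum_eq,
          ENNReal.ofReal_pow hL]
    _ = ENNReal.ofReal ((-Real.log (1 - x)) ^ r / x) := by
        rw [← ENNReal.ofReal_mul (by positivity)]
        congr 1
        field_simp

lemma MTaux.keyt {t : ℝ} (ht : t ∈ Ioi (0:ℝ)) (r : ℕ) :
    ENNReal.ofReal |Real.exp (-t)|
        * ENNReal.ofReal ((-Real.log (1 - (1 - Real.exp (-t)))) ^ r / (1 - Real.exp (-t)))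
      = ∑' k : ℕ, ENNReal.ofReal (t ^ r * Real.exp (-((k:ℝ)+1) * t)) := by
  have ht0 : (0:ℝ) < t := ht
  have hq0 : 0 < Real.exp (-t) := Real.exp_pos _
  have hq1 : Real.exp (-t) < 1 := Real.exp_lt_one_iff.2 (by linarith)
  set q := Real.exp (-t) with hq
  have hrw : ∀ k : ℕ, t ^ r * Real.exp (-((k:ℝ)+1) * t) = t ^ r * q ^ (k+1) := by
    intro k
    congr 1
    rw [hq, ← Real.exp_nat_mul]
    congr 1
    push_cast
    ring
  have hsum : HasSum (fun k : ℕ => t ^ r * q ^ (k+1)) (t ^ r * (q * (1 - q)⁻¹)) := by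
    have h0 : HasSum (fun k : ℕ => q ^ k) (1 - q)⁻¹ := hasSum_geometric_of_lt_one hq0.le hq1
    have h1 : HasSum (fun k : ℕ => q * q ^ k) (q * (1 - q)⁻¹) := h0.mul_left q
    have h2 : HasSum (fun k : ℕ => q ^ (k+1)) (q * (1 - q)⁻¹) := by
      simpa [pow_succ, mul_comm] using h1
    exact h2.mul_left _
  have hnn : ∀ k : ℕ, 0 ≤ t ^ r * q ^ (k+1) := fun k => by positivity
  calc ENNReal.ofReal |q| * ENNReal.ofReal ((-Real.log (1 - (1 - q))) ^ r / (1 - q))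
      = ENNReal.ofReal (t ^ r * (q * (1 - q)⁻¹)) := by
        rw [abs_of_pos hq0, _root_.sub_sub_cancel, Real.log_exp,
          ← ENNReal.ofReal_mul hq0.le]
        congr 1
        have h1q : (0:ℝ) < 1 - q := by linarith
        field_simp
    _ = ∑' k : ℕ, ENNReal.ofReal (t ^ r * q ^ (k+1)) := by
        rw [← hsum.tsum_eq, ENNReal.ofReal_tsum_of_nonneg hnn hsum.summable]
    _ = ∑' k : ℕ, ENNReal.ofReal (t ^ r * Real.exp (-((k:ℝ)+1) * t)) := by
        congr 1; funext k; rw [hrw k]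

lemma MTaux.term_int (r : ℕ) (hr : 0 < r) (n : Fin r → ℕ) :
    ENNReal.ofReal (MTterm r (fun _ => 1) 1 (MTaux.posEquiv r n)) =
      ∫⁻ x in Ioo (0:ℝ) 1,
        ENNReal.ofReal (x ^ ((∑ j, (n j + 1)) - 1) / ∏ j, ((n j : ℝ) + 1)) := by
  have hS : 1 ≤ ∑ j, (n j + 1) := by
    have : r ≤ ∑ j : Fin r, (n j + 1) := by
      calc r = ∑ _j : Fin r, 1 := by simp
        _ ≤ _ := Finset.sum_le_sum (fun j _ => by omega)
    omega
  have hc : (0:ℝ) < ∏ j, ((n j : ℝ) + 1) := Finset.prod_pos (fun j _ => by positivity)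
  calc ENNReal.ofReal (MTterm r (fun _ => 1) 1 (MTaux.posEquiv r n))
      = ENNReal.ofReal (1 / ((∑ j, (n j + 1) : ℕ) : ℝ))
          * ENNReal.ofReal (1 / ∏ j, ((n j : ℝ) + 1)) := by
        rw [← ENNReal.ofReal_mul (by positivity)]
        congr 1
        simp only [MTterm, MTaux.posEquiv, Equiv.coe_fn_mk, pow_one]
        rw [show (∏ j, (((n j : ℕ) + 1 : ℕ) : ℝ)) = ∏ j, ((n j : ℝ) + 1) by
          congr 1; funext j; push_cast; ring]
        field_simp
    _ = (∫⁻ x in Ioo (0:ℝ) 1, ENNReal.ofReal (x ^ ((∑ j, (n j + 1)) - 1)))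
          * ENNReal.ofReal (1 / ∏ j, ((n j : ℝ) + 1)) := by
        congr 1
        rw [MTaux.lint_pow]
        congr 1
        congr 1
        rw [show (((∑ j, (n j + 1)) - 1 : ℕ) : ℝ) = ((∑ j, (n j + 1) : ℕ) : ℝ) - 1 by
          push_cast [hS]; ring]
        ring
    _ = ∫⁻ x in Ioo (0:ℝ) 1,
          ENNReal.ofReal (x ^ ((∑ j, (n j + 1)) - 1) / ∏ j, ((n j : ℝ) + 1)) := by
        rw [← lintegral_mul_const _ ((measurable_id'.pow_const _).ennreal_ofReal)]
        congr 1
        funext x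
        rw [← ENNReal.ofReal_mul' (by positivity)]
        congr 1
        field_simp

end Aux

/-- For any positive integer `r`,
`T(1, 1, …, 1; 1) = r! · ζ(r + 1)` (with `r` ones among the first arguments of `T`),
i.e. `∑_{m_1, …, m_r ≥ 1} 1/(m_1 ⋯ m_r (m_1 + ⋯ + m_r)) = r! ∑_{n=1}^∞ n^{-(r+1)}`. -/
theorem mt_ones_one (r : ℕ) (hr : 0 < r) :
    MT r (fun _ => 1) 1 = (Nat.factorial r : ℝ) * zetaVal (r + 1) := by
  have hterm_nn : ∀ m : {m : Fin r → ℕ // ∀ j, 0 < m j}, 0 ≤ MTterm r (fun _ => 1) 1 m := by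
    intro m
    unfold MTterm
    positivity
  have hF : (∑' m, ENNReal.ofReal (MTterm r (fun _ => 1) 1 m))
      = ∑' k : ℕ, ENNReal.ofReal ((r.factorial : ℝ) / ((k:ℝ)+1) ^ (r+1)) := by
    calc ∑' m, ENNReal.ofReal (MTterm r (fun _ => 1) 1 m)
        = ∑' n : Fin r → ℕ, ENNReal.ofReal (MTterm r (fun _ => 1) 1 (MTaux.posEquiv r n)) :=
          ((MTaux.posEquiv r).tsum_eq
            (fun m => ENNReal.ofReal (MTterm r (fun _ => 1) 1 m))).symm
      _ = ∑' n : Fin r → ℕ, ∫⁻ x in Ioo (0:ℝ) 1,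
            ENNReal.ofReal (x ^ ((∑ j, (n j + 1)) - 1) / ∏ j, ((n j : ℝ) + 1)) :=
          tsum_congr (MTaux.term_int r hr)
      _ = ∫⁻ x in Ioo (0:ℝ) 1, ∑' n : Fin r → ℕ,
            ENNReal.ofReal (x ^ ((∑ j, (n j + 1)) - 1) / ∏ j, ((n j : ℝ) + 1)) := by
          rw [lintegral_tsum]
          intro n
          exact ((measurable_id'.pow_const _).div_const _).ennreal_ofReal.aemeasurable
      _ = ∫⁻ x in Ioo (0:ℝ) 1, ENNReal.ofReal ((-Real.log (1 - x)) ^ r / x) :=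
          setLIntegral_congr_fun_ae measurableSet_Ioo
            (ae_of_all _ fun x hx => MTaux.keyx hx r hr)
      _ = ∫⁻ t in Ioi (0:ℝ), ENNReal.ofReal |Real.exp (-t)|
            * ENNReal.ofReal
              ((-Real.log (1 - (1 - Real.exp (-t)))) ^ r / (1 - Real.exp (-t))) := by
          rw [← MTaux.image_sub_exp]
          exact MTaux.lintegral_image_eq_lintegral_abs_deriv_mul measurableSet_Ioi
            (fun t _ => (MTaux.hasDeriv_sub_exp t).hasDerivWithinAt)
            (MTaux.strictMono_sub_exp.injective.injOn) _
      _ = ∫⁻ t in Ioi (0:ℝ), ∑' k : ℕ,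
            ENNReal.ofReal (t ^ r * Real.exp (-((k:ℝ)+1) * t)) :=
          setLIntegral_congr_fun_ae measurableSet_Ioi
            (ae_of_all _ fun t ht => MTaux.keyt ht r)
      _ = ∑' k : ℕ, ∫⁻ t in Ioi (0:ℝ),
            ENNReal.ofReal (t ^ r * Real.exp (-((k:ℝ)+1) * t)) := by
          rw [lintegral_tsum]
          intro k
          exact ((measurable_id'.pow_const _).mul
            ((measurable_id'.const_mul _).exp)).ennreal_ofReal.aemeasurable
      _ = ∑' k : ℕ, ENNReal.ofReal ((r.factorial : ℝ) / ((k:ℝ)+1) ^ (r+1)) :=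
          tsum_congr (fun k => MTaux.lint_gamma r k)
  have h1 : MT r (fun _ => 1) 1
      = (∑' m, ENNReal.ofReal (MTterm r (fun _ => 1) 1 m)).toReal := by
    rw [ENNReal.tsum_toReal_eq (fun m => ENNReal.ofReal_ne_top)]
    exact tsum_congr (fun m => (ENNReal.toReal_ofReal (hterm_nn m)).symm)
  rw [h1, hF, ENNReal.tsum_toReal_eq (fun k => ENNReal.ofReal_ne_top)]
  have hto : ∀ k : ℕ, (ENNReal.ofReal ((r.factorial : ℝ) / ((k:ℝ)+1) ^ (r+1))).toReal
      = (r.factorial : ℝ) * (1 / ((k:ℝ)+1) ^ (r+1)) := by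
    intro k
    rw [ENNReal.toReal_ofReal (by positivity)]
    ring
  rw [tsum_congr hto, tsum_mul_left]
  rfl
end
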